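/- Associativity of environment merging: let e₁, e₂, e₃ be well-formed suspension environments and let nl₁, ol₂, nl₂, ol₃ be natural numbers such that the environments A = ⟦⟦e₁, nl₁, ol₂, e₂⟧, nl₂ + (nl₁ ∸ ol₂), ol₃, e₃⟧ and B = ⟦e₁, nl₁, ol₂ + (ol₃ ∸ nl₂), ⟦e₂, nl₂, ol₃, e₃⟧⟧ are well-formed. Then there exists a simple environment C such that A ▷rm* C and B ▷rm* C. -/

import Mathlib

mutual
inductive STerm : Type
  | const : ℕ → STerm
  | var   : ℕ → STerm
  | app   : STerm → STerm → STerm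
  | lam   : STerm → STerm
  | susp  : STerm → ℕ → ℕ → SEnv → STerm
inductive SEnv : Type
  | nil   : SEnv
  | cons  : STerm → ℕ → SEnv → SEnv
  | merge : SEnv → ℕ → ℕ → SEnv → SEnv
end

/-- Length of an environment. -/
def SEnv.len : SEnv → ℕ
  | .nil => 0
  | .cons _ _ e => 1 + e.len
  | .merge e1 nl1 ol2 _ => e1.len + (ol2 - nl1)

/-- Level of an environment. -/
def SEnv.lev : SEnv → ℕ
  | .nil => 0
  | .cons _ n _ => n
  | .merge _ nl1 ol2 e2 => e2.lev + (nl1 - ol2)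

mutual
/-- Well-formedness of suspension terms. -/
def STerm.wf : STerm → Prop
  | .const _ => True
  | .var _ => True
  | .app t1 t2 => t1.wf ∧ t2.wf
  | .lam t => t.wf
  | .susp t ol nl e => t.wf ∧ e.wf ∧ e.len = ol ∧ e.lev ≤ nl
/-- Well-formedness of suspension environments. -/
def SEnv.wf : SEnv → Prop
  | .nil => True
  | .cons t n e => t.wf ∧ e.wf ∧ e.lev ≤ n
  | .merge e1 nl1 ol2 e2 => e1.wf ∧ e2.wf ∧ e2.len = ol2 ∧ e1.lev ≤ nl1
end

/-- A simple environment: no merged environments on the top spine. -/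
def SEnv.simple : SEnv → Prop
  | .nil => True
  | .cons _ _ e => e.simple
  | .merge _ _ _ _ => False

mutual
/-- One step of the reading rules (r1)-(r6) and merging rules (m1)-(m6),
applied anywhere (compatible closure). -/
inductive StepT : STerm → STerm → Prop
  | r1 : ∀ (c ol nl : ℕ) (e : SEnv), StepT (.susp (.const c) ol nl e) (.const c)
  | r2 : ∀ (i nl : ℕ), StepT (.susp (.var i) 0 nl .nil) (.var (i + nl))
  | r3 : ∀ (ol nl : ℕ) (t : STerm) (l : ℕ) (e : SEnv),
      StepT (.susp (.var 1) ol nl (.cons t l e)) (.susp t 0 (nl - l) .nil)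
  | r4 : ∀ (i ol nl : ℕ) (t : STerm) (l : ℕ) (e : SEnv), 1 < i →
      StepT (.susp (.var i) ol nl (.cons t l e)) (.susp (.var (i - 1)) (ol - 1) nl e)
  | r5 : ∀ (t1 t2 : STerm) (ol nl : ℕ) (e : SEnv),
      StepT (.susp (.app t1 t2) ol nl e) (.app (.susp t1 ol nl e) (.susp t2 ol nl e))
  | r6 : ∀ (t : STerm) (ol nl : ℕ) (e : SEnv),
      StepT (.susp (.lam t) ol nl e)
            (.lam (.susp t (ol + 1) (nl + 1) (.cons (.var 1) (nl + 1) e)))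
  | m1 : ∀ (t : STerm) (ol1 nl1 : ℕ) (e1 : SEnv) (ol2 nl2 : ℕ) (e2 : SEnv),
      StepT (.susp (.susp t ol1 nl1 e1) ol2 nl2 e2)
            (.susp t (ol1 + (ol2 - nl1)) (nl2 + (nl1 - ol2)) (.merge e1 nl1 ol2 e2))
  | appL : ∀ (t1 t1' t2 : STerm), StepT t1 t1' → StepT (.app t1 t2) (.app t1' t2)
  | appR : ∀ (t1 t2 t2' : STerm), StepT t2 t2' → StepT (.app t1 t2) (.app t1 t2')
  | lamC : ∀ (t t' : STerm), StepT t t' → StepT (.lam t) (.lam t')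
  | suspT : ∀ (t t' : STerm) (ol nl : ℕ) (e : SEnv),
      StepT t t' → StepT (.susp t ol nl e) (.susp t' ol nl e)
  | suspE : ∀ (t : STerm) (ol nl : ℕ) (e e' : SEnv),
      StepE e e' → StepT (.susp t ol nl e) (.susp t ol nl e')
inductive StepE : SEnv → SEnv → Prop
  | m2 : ∀ (e1 : SEnv) (nl1 : ℕ), StepE (.merge e1 nl1 0 .nil) e1
  | m3 : ∀ (ol2 : ℕ) (e2 : SEnv), StepE (.merge .nil 0 ol2 e2) e2
  | m4 : ∀ (nl1 ol2 : ℕ) (t : STerm) (l : ℕ) (e2 : SEnv), 1 ≤ nl1 →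
      StepE (.merge .nil nl1 ol2 (.cons t l e2)) (.merge .nil (nl1 - 1) (ol2 - 1) e2)
  | m5 : ∀ (t : STerm) (n : ℕ) (e1 : SEnv) (nl1 ol2 : ℕ) (s : STerm) (l : ℕ) (e2 : SEnv),
      n < nl1 →
      StepE (.merge (.cons t n e1) nl1 ol2 (.cons s l e2))
            (.merge (.cons t n e1) (nl1 - 1) (ol2 - 1) e2)
  | m6 : ∀ (t : STerm) (n : ℕ) (e1 : SEnv) (ol2 : ℕ) (s : STerm) (l : ℕ) (e2 : SEnv),
      StepE (.merge (.cons t n e1) n ol2 (.cons s l e2))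
            (.cons (.susp t ol2 l (.cons s l e2)) (l + (n - ol2))
                   (.merge e1 n ol2 (.cons s l e2)))
  | consT : ∀ (t t' : STerm) (n : ℕ) (e : SEnv),
      StepT t t' → StepE (.cons t n e) (.cons t' n e)
  | consE : ∀ (t : STerm) (n : ℕ) (e e' : SEnv),
      StepE e e' → StepE (.cons t n e) (.cons t n e')
  | mergeL : ∀ (e1 e1' : SEnv) (nl1 ol2 : ℕ) (e2 : SEnv),
      StepE e1 e1' → StepE (.merge e1 nl1 ol2 e2) (.merge e1' nl1 ol2 e2)
  | mergeR : ∀ (e1 : SEnv) (nl1 ol2 : ℕ) (e2 e2' : SEnv),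
      StepE e2 e2' → StepE (.merge e1 nl1 ol2 e2) (.merge e1 nl1 ol2 e2')
end


namespace Aux5
open Relation

/-- Merge-evaluation of two simple environments. -/
def m : SEnv → ℕ → ℕ → SEnv → SEnv
  | e1, _, _, .nil => e1
  | .nil, 0, _, e2 => e2
  | .nil, nl1+1, ol2, .cons _ _ e2 => m .nil nl1 (ol2-1) e2
  | .cons t n e1, nl1, ol2, .cons s l e2 =>
      if n < nl1 then m (.cons t n e1) (nl1-1) (ol2-1) e2
      else .cons (.susp t ol2 l (.cons s l e2)) (l+(n-ol2)) (m e1 n ol2 (.cons s l e2))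
  | _, _, _, _ => .nil
termination_by e1 _ _ e2 => sizeOf e1 + sizeOf e2
decreasing_by
  all_goals simp_wf

@[simp] lemma m_nilr (e1 : SEnv) (a b : ℕ) : m e1 a b .nil = e1 := by
  cases e1 <;> simp [m]

@[simp] lemma m_nil0 (b : ℕ) (e2 : SEnv) : m .nil 0 b e2 = e2 := by
  cases e2 <;> simp [m]

@[simp] lemma m_m4 (k ol2 : ℕ) (t : STerm) (l : ℕ) (e2 : SEnv) :
    m .nil (k+1) ol2 (.cons t l e2) = m .nil k (ol2-1) e2 := by
  simp [m]

lemma m_cc (t : STerm) (n : ℕ) (e1 : SEnv) (nl1 ol2 : ℕ) (s : STerm) (l : ℕ) (e2 : SEnv) :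
    m (.cons t n e1) nl1 ol2 (.cons s l e2) =
      if n < nl1 then m (.cons t n e1) (nl1-1) (ol2-1) e2
      else .cons (.susp t ol2 l (.cons s l e2)) (l+(n-ol2)) (m e1 n ol2 (.cons s l e2)) := by
  rw [m]

lemma rtg_consE (t : STerm) (n : ℕ) {e e' : SEnv} (h : ReflTransGen StepE e e') :
    ReflTransGen StepE (.cons t n e) (.cons t n e') :=
  ReflTransGen.lift (fun x => SEnv.cons t n x) (fun _ _ hs => StepE.consE _ _ _ _ hs) _ _ h

lemma rtg_consT (n : ℕ) (e : SEnv) {t t' : STerm} (h : ReflTransGen StepT t t') :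
    ReflTransGen StepE (.cons t n e) (.cons t' n e) :=
  ReflTransGen.lift (fun x => SEnv.cons x n e) (fun _ _ hs => StepE.consT _ _ _ _ hs) _ _ h

lemma rtg_mergeL (nl1 ol2 : ℕ) (e2 : SEnv) {a a' : SEnv} (h : ReflTransGen StepE a a') :
    ReflTransGen StepE (.merge a nl1 ol2 e2) (.merge a' nl1 ol2 e2) :=
  ReflTransGen.lift (fun x => SEnv.merge x nl1 ol2 e2) (fun _ _ hs => StepE.mergeL _ _ _ _ _ hs) _ _ h

lemma rtg_mergeR (e1 : SEnv) (nl1 ol2 : ℕ) {b b' : SEnv} (h : ReflTransGen StepE b b') :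
    ReflTransGen StepE (.merge e1 nl1 ol2 b) (.merge e1 nl1 ol2 b') :=
  ReflTransGen.lift (fun x => SEnv.merge e1 nl1 ol2 x) (fun _ _ hs => StepE.mergeR _ _ _ _ _ hs) _ _ h

lemma rtg_suspE (t : STerm) (a b : ℕ) {e e' : SEnv} (h : ReflTransGen StepE e e') :
    ReflTransGen StepT (.susp t a b e) (.susp t a b e') :=
  ReflTransGen.lift (fun x => STerm.susp t a b x) (fun _ _ hs => StepT.suspE _ _ _ _ _ hs) _ _ h

lemma m_all : ∀ (e1 : SEnv) (nl1 ol2 : ℕ) (e2 : SEnv),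
    e1.simple → e2.simple → e1.wf → e2.wf → e2.len = ol2 → e1.lev ≤ nl1 →
    (m e1 nl1 ol2 e2).simple ∧ (m e1 nl1 ol2 e2).wf ∧
      (m e1 nl1 ol2 e2).len = e1.len + (ol2 - nl1) ∧
      (m e1 nl1 ol2 e2).lev ≤ e2.lev + (nl1 - ol2)
  | e1, nl1, ol2, .nil => fun s1 _ w1 _ h2 l1 => by
      simp only [SEnv.len] at h2
      subst h2
      refine ⟨by simpa using s1, by simpa using w1, ?_, ?_⟩
      · simp [SEnv.len]
      · simpa [SEnv.lev] using l1
  | .nil, 0, ol2, .cons s l e2 => fun _ s2 _ w2 h2 _ => by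
      simp only [m_nil0]
      exact ⟨s2, w2, by simp [SEnv.len] at h2 ⊢; omega, by simp [SEnv.lev]⟩
  | .nil, nl1+1, ol2, .cons s l e2 => fun _ s2 _ w2 h2 _ => by
      simp only [SEnv.simple] at s2
      simp only [SEnv.wf] at w2
      simp only [SEnv.len] at h2
      have IH := m_all .nil nl1 (ol2-1) e2 trivial s2 trivial w2.2.1 (by omega) (Nat.zero_le _)
      rw [m_m4]
      refine ⟨IH.1, IH.2.1, ?_, ?_⟩
      · rw [IH.2.2.1]; simp [SEnv.len]; omega
      · have := IH.2.2.2
        have hl := w2.2.2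
        simp only [SEnv.lev] at *
        omega
  | .cons t n e1, nl1, ol2, .cons s l e2 => fun s1 s2 w1 w2 h2 l1 => by
      have s1' := s1; have s2' := s2; have w1' := w1; have w2' := w2
      simp only [SEnv.simple] at s1' s2'
      simp only [SEnv.wf] at w1' w2'
      simp only [SEnv.len] at h2
      simp only [SEnv.lev] at l1
      rw [m_cc]
      by_cases h : n < nl1
      · rw [if_pos h]
        have IH := m_all (.cons t n e1) (nl1-1) (ol2-1) e2 s1 s2' w1 w2'.2.1 (by omega)
          (by simp [SEnv.lev]; omega)
        refine ⟨IH.1, IH.2.1, ?_, ?_⟩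
        · rw [IH.2.2.1]; simp [SEnv.len]; omega
        · have := IH.2.2.2
          have hl := w2'.2.2
          simp only [SEnv.lev] at *
          omega
      · have hn : nl1 = n := by omega
        subst hn
        rw [if_neg h]
        have IH := m_all e1 nl1 ol2 (.cons s l e2) s1' s2 w1'.2.1 w2 (by simp [SEnv.len]; omega) w1'.2.2
        have hlev := IH.2.2.2
        simp only [SEnv.lev] at hlev
        refine ⟨IH.1, ?_, ?_, ?_⟩
        · simp only [SEnv.wf, STerm.wf]
          exact ⟨⟨w1'.1, w2, by simp [SEnv.len]; omega, by simp [SEnv.lev]⟩, IH.2.1, hlev⟩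
        · simp only [SEnv.len, IH.2.2.1]; omega
        · simp only [SEnv.lev]; omega
  | .merge _ _ _ _, _, _, _ => fun s1 => by simp [SEnv.simple] at s1
  | .nil, _, _, .merge _ _ _ _ => fun _ s2 => by simp [SEnv.simple] at s2
  | .cons _ _ _, _, _, .merge _ _ _ _ => fun _ s2 => by simp [SEnv.simple] at s2
termination_by e1 _ _ e2 => sizeOf e1 + sizeOf e2

lemma eval : ∀ (e1 : SEnv) (nl1 ol2 : ℕ) (e2 : SEnv),
    e1.simple → e2.simple → e1.wf → e2.wf → e2.len = ol2 → e1.lev ≤ nl1 →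
    ReflTransGen StepE (.merge e1 nl1 ol2 e2) (m e1 nl1 ol2 e2)
  | e1, nl1, ol2, .nil => fun _ _ _ _ h2 _ => by
      simp only [SEnv.len] at h2
      subst h2
      simpa using ReflTransGen.single (StepE.m2 e1 nl1)
  | .nil, 0, ol2, .cons s l e2 => fun _ _ _ _ _ _ => by
      simpa using ReflTransGen.single (StepE.m3 ol2 (.cons s l e2))
  | .nil, nl1+1, ol2, .cons s l e2 => fun _ s2 _ w2 h2 _ => by
      have s2' := s2; have w2' := w2
      simp only [SEnv.simple] at s2'
      simp only [SEnv.wf] at w2'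
      simp only [SEnv.len] at h2
      have IH := eval .nil nl1 (ol2-1) e2 trivial s2' trivial w2'.2.1 (by omega) (Nat.zero_le _)
      have step : StepE (.merge .nil (nl1+1) ol2 (.cons s l e2)) (.merge .nil nl1 (ol2-1) e2) := by
        simpa using StepE.m4 (nl1+1) ol2 s l e2 (by omega)
      rw [m_m4]
      exact (ReflTransGen.single step).trans IH
  | .cons t n e1, nl1, ol2, .cons s l e2 => fun s1 s2 w1 w2 h2 l1 => by
      have s1' := s1; have s2' := s2; have w1' := w1; have w2' := w2
      simp only [SEnv.simple] at s1' s2'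
      simp only [SEnv.wf] at w1' w2'
      simp only [SEnv.len] at h2
      simp only [SEnv.lev] at l1
      rw [m_cc]
      by_cases h : n < nl1
      · rw [if_pos h]
        have IH := eval (.cons t n e1) (nl1-1) (ol2-1) e2 s1 s2' w1 w2'.2.1 (by omega)
          (by simp [SEnv.lev]; omega)
        exact (ReflTransGen.single (StepE.m5 t n e1 nl1 ol2 s l e2 h)).trans IH
      · have hn : nl1 = n := by omega
        subst hn
        rw [if_neg h]
        have IH := eval e1 nl1 ol2 (.cons s l e2) s1' s2 w1'.2.1 w2 (by simp [SEnv.len]; omega) w1'.2.2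
        exact (ReflTransGen.single (StepE.m6 t nl1 e1 ol2 s l e2)).trans (rtg_consE _ _ IH)
  | .merge _ _ _ _, _, _, _ => fun s1 => by simp [SEnv.simple] at s1
  | .nil, _, _, .merge _ _ _ _ => fun _ s2 => by simp [SEnv.simple] at s2
  | .cons _ _ _, _, _, .merge _ _ _ _ => fun _ s2 => by simp [SEnv.simple] at s2
termination_by e1 _ _ e2 => sizeOf e1 + sizeOf e2

lemma shift : ∀ (e : SEnv) (k nl1 ol : ℕ) (e1 : SEnv),
    e1.simple → e.simple → e1.lev ≤ nl1 → e.len = ol →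
    m e1 (nl1+k) ol e = m e1 nl1 (ol - k) (m .nil k ol e)
  | .nil, k, nl1, ol, e1 => fun _ _ _ h => by
      simp only [SEnv.len] at h
      subst h
      simp
  | .cons s l e', 0, nl1, ol, e1 => fun _ _ _ _ => by simp
  | .cons s l e', k+1, nl1, ol, e1 => fun s1 se hl1 h => by
      have se' := se
      simp only [SEnv.simple] at se'
      simp only [SEnv.len] at h
      have IH := shift e' k nl1 (ol-1) e1 s1 se' hl1 (by omega)
      rw [m_m4, show ol - (k+1) = (ol-1) - k by omega, ← IH]
      cases e1 with
      | nil => rw [show nl1+(k+1) = (nl1+k)+1 by omega, m_m4]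
      | cons t n e1' =>
          simp only [SEnv.lev] at hl1
          rw [m_cc, if_pos (by omega : n < nl1+(k+1)), show nl1+(k+1)-1 = nl1+k by omega]
      | merge a b c d => simp [SEnv.simple] at s1
  | .merge _ _ _ _, _, _, _, _ => fun _ se _ _ => by simp [SEnv.simple] at se

lemma keyAux : ∀ (fuel : ℕ) (e1 : SEnv) (nl1 ol2 : ℕ) (e2 : SEnv) (nl2 ol3 : ℕ) (e3 : SEnv),
    sizeOf e1 + sizeOf e2 + sizeOf e3 < fuel →
    e1.simple → e2.simple → e3.simple →
    e1.wf → e2.wf → e3.wf →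
    e2.len = ol2 → e3.len = ol3 →
    e1.lev ≤ nl1 → e2.lev ≤ nl2 →
    ReflTransGen StepE
      (.merge (m e1 nl1 ol2 e2) (nl2 + (nl1 - ol2)) ol3 e3)
      (m e1 nl1 (ol2 + (ol3 - nl2)) (m e2 nl2 ol3 e3)) := by
  intro fuel
  induction fuel with
  | zero => intro e1 _ _ e2 _ _ e3 hsz; omega
  | succ fl IH =>
  intro e1 nl1 ol2 e2 nl2 ol3 e3 hsz s1 s2 s3 w1 w2 w3 h2 h3 hv1 hv2
  cases e3 with
  | merge a b c d => simp [SEnv.simple] at s3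
  | nil =>
      simp only [SEnv.len] at h3
      subst h3
      simpa using ReflTransGen.single (StepE.m2 (m e1 nl1 ol2 e2) (nl2 + (nl1 - ol2)))
  | cons s3t l3 e3' =>
    have s3' := s3; have w3' := w3
    simp only [SEnv.simple] at s3'
    simp only [SEnv.wf] at w3'
    have h3' : (1 : ℕ) + e3'.len = ol3 := by simpa [SEnv.len] using h3
    cases e2 with
    | merge a b c d => simp [SEnv.simple] at s2
    | nil =>
        simp only [SEnv.len] at h2
        subst h2
        have E := eval e1 (nl1+nl2) ol3 (.cons s3t l3 e3') s1 s3 w1 w3 h3 (by omega)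
        have S := shift (.cons s3t l3 e3') nl2 nl1 ol3 e1 s1 s3 hv1 h3
        rw [show nl2+(nl1-0) = nl1+nl2 by omega, m_nilr,
          show (0:ℕ)+(ol3-nl2) = ol3-nl2 by omega, ← S]
        exact E
    | cons s2t l2 e2' =>
      have s2' := s2; have w2' := w2
      simp only [SEnv.simple] at s2'
      simp only [SEnv.wf] at w2'
      have h2' : (1 : ℕ) + e2'.len = ol2 := by simpa [SEnv.len] using h2
      have hv2' : l2 ≤ nl2 := by simpa [SEnv.lev] using hv2
      by_cases hcmp : l2 < nl2
      · -- case (B2a)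
        have IHr := IH e1 nl1 ol2 (.cons s2t l2 e2') (nl2-1) (ol3-1) e3'
          (by simp only [SEnv.cons.sizeOf_spec] at hsz ⊢; omega)
          s1 s2 s3' w1 w2 w3'.2.1 h2 (by omega) hv1 (by simp [SEnv.lev]; omega)
        have M := m_all e1 nl1 ol2 (.cons s2t l2 e2') s1 s2 w1 w2 h2 hv1
        have hlevX : (m e1 nl1 ol2 (.cons s2t l2 e2')).lev < nl2 + (nl1 - ol2) := by
          have := M.2.2.2
          simp only [SEnv.lev] at this
          omega
        have step : StepE (.merge (m e1 nl1 ol2 (.cons s2t l2 e2')) (nl2+(nl1-ol2)) ol3 (.cons s3t l3 e3'))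
            (.merge (m e1 nl1 ol2 (.cons s2t l2 e2')) (nl2-1+(nl1-ol2)) (ol3-1) e3') := by
          rw [show nl2-1+(nl1-ol2) = nl2+(nl1-ol2)-1 by omega]
          rcases hX : m e1 nl1 ol2 (.cons s2t l2 e2') with _ | ⟨tX, qX, X'⟩ | ⟨a,b,c,d⟩
          · exact StepE.m4 (nl2+(nl1-ol2)) ol3 s3t l3 e3' (by omega)
          · rw [hX] at hlevX
            simp only [SEnv.lev] at hlevX
            exact StepE.m5 tX qX X' (nl2+(nl1-ol2)) ol3 s3t l3 e3' hlevX
          · have := M.1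
            rw [hX] at this
            simp [SEnv.simple] at this
        refine (ReflTransGen.single step).trans ?_
        rw [m_cc, if_pos hcmp, show ol2 + (ol3 - nl2) = ol2 + ((ol3-1) - (nl2-1)) by omega]
        exact IHr
      · -- l2 = nl2
        have hl2 : nl2 = l2 := by omega
        subst hl2
        cases e1 with
        | merge a b c d => simp [SEnv.simple] at s1
        | nil =>
          cases nl1 with
          | zero =>
            simp only [m_nil0, Nat.zero_sub, Nat.add_zero, Nat.sub_zero]
            exact eval (.cons s2t nl2 e2') nl2 ol3 (.cons s3t l3 e3') s2 s3 w2 w3 h3 hv2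
          | succ k =>
            rw [m_m4]
            have IHr := IH .nil k (ol2-1) e2' nl2 ol3 (.cons s3t l3 e3')
              (by simp only [SEnv.cons.sizeOf_spec] at hsz ⊢; omega)
              trivial s2' s3 trivial w2'.2.1 w3 (by omega) h3 (Nat.zero_le _) w2'.2.2
            rw [show nl2+(k+1-ol2) = nl2+(k-(ol2-1)) by omega]
            rw [m_cc s2t nl2 e2' nl2 ol3 s3t l3 e3', if_neg (lt_irrefl nl2)]
            rw [m_m4, show ol2+(ol3-nl2)-1 = (ol2-1)+(ol3-nl2) by omega]
            exact IHr
        | cons t1 n1 e1' =>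
          have s1' := s1; have w1' := w1
          simp only [SEnv.simple] at s1'
          simp only [SEnv.wf] at w1'
          have hv1' : n1 ≤ nl1 := by simpa [SEnv.lev] using hv1
          by_cases hlt : n1 < nl1
          · rw [m_cc, if_pos hlt]
            have IHr := IH (.cons t1 n1 e1') (nl1-1) (ol2-1) e2' nl2 ol3 (.cons s3t l3 e3')
              (by simp only [SEnv.cons.sizeOf_spec] at hsz ⊢; omega)
              s1 s2' s3 w1 w2'.2.1 w3 (by omega) h3 (by simp [SEnv.lev]; omega) w2'.2.2
            rw [show nl2+(nl1-ol2) = nl2+((nl1-1)-(ol2-1)) by omega]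
            rw [m_cc s2t nl2 e2' nl2 ol3 s3t l3 e3', if_neg (lt_irrefl nl2)]
            rw [m_cc t1 n1 e1' nl1, if_pos hlt]
            rw [show ol2+(ol3-nl2)-1 = (ol2-1)+(ol3-nl2) by omega]
            exact IHr
          · have hn : nl1 = n1 := by omega
            subst hn
            rw [m_cc, if_neg hlt]
            have step1 := StepE.m6 (STerm.susp t1 ol2 nl2 (.cons s2t nl2 e2'))
              (nl2+(nl1-ol2)) (m e1' nl1 ol2 (.cons s2t nl2 e2')) ol3 s3t l3 e3'
            refine (ReflTransGen.single step1).trans ?_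
            have hd : ReflTransGen StepT
                (.susp (.susp t1 ol2 nl2 (.cons s2t nl2 e2')) ol3 l3 (.cons s3t l3 e3'))
                (.susp t1 (ol2+(ol3-nl2)) (l3+(nl2-ol3)) (m (.cons s2t nl2 e2') nl2 ol3 (.cons s3t l3 e3'))) :=
              (ReflTransGen.single (StepT.m1 t1 ol2 nl2 (.cons s2t nl2 e2') ol3 l3 (.cons s3t l3 e3'))).trans
                (rtg_suspE _ _ _ (eval (.cons s2t nl2 e2') nl2 ol3 (.cons s3t l3 e3') s2 s3 w2 w3 h3 hv2))
            have IHr := IH e1' nl1 ol2 (.cons s2t nl2 e2') nl2 ol3 (.cons s3t l3 e3')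
              (by simp only [SEnv.cons.sizeOf_spec] at hsz ⊢; omega)
              s1' s2 s3 w1'.2.1 w2 w3 h2 h3 w1'.2.2 hv2
            have chain := (rtg_consT (l3+(nl2+(nl1-ol2)-ol3)) _ hd).trans (rtg_consE _ _ IHr)
            have hfold : m (.cons s2t nl2 e2') nl2 ol3 (.cons s3t l3 e3')
                = .cons (.susp s2t ol3 l3 (.cons s3t l3 e3')) (l3+(nl2-ol3)) (m e2' nl2 ol3 (.cons s3t l3 e3')) := by
              rw [m_cc, if_neg (lt_irrefl nl2)]
            conv_rhs => rw [hfold, m_cc, if_neg hlt, ← hfold]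
            rw [show l3+(nl2-ol3)+(nl1-(ol2+(ol3-nl2))) = l3+(nl2+(nl1-ol2)-ol3) by omega]
            exact chain

lemma key (e1 : SEnv) (nl1 ol2 : ℕ) (e2 : SEnv) (nl2 ol3 : ℕ) (e3 : SEnv)
    (s1 : e1.simple) (s2 : e2.simple) (s3 : e3.simple)
    (w1 : e1.wf) (w2 : e2.wf) (w3 : e3.wf)
    (h2 : e2.len = ol2) (h3 : e3.len = ol3)
    (hv1 : e1.lev ≤ nl1) (hv2 : e2.lev ≤ nl2) :
    ReflTransGen StepE
      (.merge (m e1 nl1 ol2 e2) (nl2 + (nl1 - ol2)) ol3 e3)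
      (m e1 nl1 (ol2 + (ol3 - nl2)) (m e2 nl2 ol3 e3)) :=
  keyAux (sizeOf e1 + sizeOf e2 + sizeOf e3 + 1) e1 nl1 ol2 e2 nl2 ol3 e3 (by omega)
    s1 s2 s3 w1 w2 w3 h2 h3 hv1 hv2

/-- Normalize the top spine of an environment to a simple one. -/
def norm : SEnv → SEnv
  | .nil => .nil
  | .cons t n e => .cons t n (norm e)
  | .merge a x y b => m (norm a) x y (norm b)

lemma norm_all : ∀ e : SEnv, e.wf →
    (norm e).simple ∧ (norm e).wf ∧ (norm e).len = e.len ∧ (norm e).lev ≤ e.lev ∧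
      ReflTransGen StepE e (norm e)
  | .nil => fun _ => ⟨trivial, trivial, rfl, le_refl _, ReflTransGen.refl⟩
  | .cons t n e => fun w => by
      have w' := w
      simp only [SEnv.wf] at w'
      obtain ⟨S, W, L, V, R⟩ := norm_all e w'.2.1
      refine ⟨?_, ?_, ?_, ?_, ?_⟩
      · simpa [norm, SEnv.simple] using S
      · simp only [norm, SEnv.wf]
        exact ⟨w'.1, W, le_trans V w'.2.2⟩
      · simp [norm, SEnv.len, L]
      · simp [norm, SEnv.lev]
      · exact rtg_consE t n R
  | .merge a x y b => fun w => by
      have w' := w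
      simp only [SEnv.wf] at w'
      obtain ⟨wa, wb, hlen, hlev⟩ := w'
      obtain ⟨Sa, Wa, La, Va, Ra⟩ := norm_all a wa
      obtain ⟨Sb, Wb, Lb, Vb, Rb⟩ := norm_all b wb
      have hlen' : (norm b).len = y := Lb.trans hlen
      have hlev' : (norm a).lev ≤ x := le_trans Va hlev
      have M := m_all (norm a) x y (norm b) Sa Sb Wa Wb hlen' hlev'
      refine ⟨M.1, M.2.1, ?_, ?_, ?_⟩
      · simp only [norm, SEnv.len, M.2.2.1, La]
      · simp only [norm, SEnv.lev]
        have := M.2.2.2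
        omega
      · exact (rtg_mergeL x y b Ra).trans ((rtg_mergeR (norm a) x y Rb).trans
          (eval (norm a) x y (norm b) Sa Sb Wa Wb hlen' hlev'))

end Aux5

/-- associativity of environment merging. -/
theorem stmt5 (e1 e2 e3 : SEnv) (nl1 ol2 nl2 ol3 : ℕ)
    (he1 : e1.wf) (he2 : e2.wf) (he3 : e3.wf)
    (hA : (SEnv.merge (SEnv.merge e1 nl1 ol2 e2) (nl2 + (nl1 - ol2)) ol3 e3).wf)
    (hB : (SEnv.merge e1 nl1 (ol2 + (ol3 - nl2)) (SEnv.merge e2 nl2 ol3 e3)).wf) :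
    ∃ C : SEnv, C.simple ∧
      Relation.ReflTransGen StepE
        (SEnv.merge (SEnv.merge e1 nl1 ol2 e2) (nl2 + (nl1 - ol2)) ol3 e3) C ∧
      Relation.ReflTransGen StepE
        (SEnv.merge e1 nl1 (ol2 + (ol3 - nl2)) (SEnv.merge e2 nl2 ol3 e3)) C := by
  classical
  simp only [SEnv.wf] at hA hB
  obtain ⟨⟨_, _, hlen2, hlev1⟩, _, hlen3, _⟩ := hA
  obtain ⟨_, ⟨_, _, hlen3', hlev2⟩, _, _⟩ := hB
  obtain ⟨S1, W1, L1, V1, R1⟩ := Aux5.norm_all e1 he1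
  obtain ⟨S2, W2, L2, V2, R2⟩ := Aux5.norm_all e2 he2
  obtain ⟨S3, W3, L3, V3, R3⟩ := Aux5.norm_all e3 he3
  have hl2 : (Aux5.norm e2).len = ol2 := L2.trans hlen2
  have hl3 : (Aux5.norm e3).len = ol3 := L3.trans hlen3
  have hv1 : (Aux5.norm e1).lev ≤ nl1 := le_trans V1 hlev1
  have hv2 : (Aux5.norm e2).lev ≤ nl2 := le_trans V2 hlev2
  have M23 := Aux5.m_all (Aux5.norm e2) nl2 ol3 (Aux5.norm e3) S2 S3 W2 W3 hl3 hv2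
  have hlM : (Aux5.m (Aux5.norm e2) nl2 ol3 (Aux5.norm e3)).len = ol2 + (ol3 - nl2) := by
    rw [M23.2.2.1, hl2]
  have MC := Aux5.m_all (Aux5.norm e1) nl1 (ol2 + (ol3 - nl2))
    (Aux5.m (Aux5.norm e2) nl2 ol3 (Aux5.norm e3)) S1 M23.1 W1 M23.2.1 hlM hv1
  refine ⟨Aux5.m (Aux5.norm e1) nl1 (ol2 + (ol3 - nl2)) (Aux5.m (Aux5.norm e2) nl2 ol3 (Aux5.norm e3)),
    MC.1, ?_, ?_⟩
  · have p1 : Relation.ReflTransGen StepE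
        (SEnv.merge (SEnv.merge e1 nl1 ol2 e2) (nl2 + (nl1 - ol2)) ol3 e3)
        (SEnv.merge (SEnv.merge (Aux5.norm e1) nl1 ol2 (Aux5.norm e2)) (nl2 + (nl1 - ol2)) ol3 (Aux5.norm e3)) :=
      (Aux5.rtg_mergeL _ _ _ ((Aux5.rtg_mergeL _ _ _ R1).trans (Aux5.rtg_mergeR _ _ _ R2))).trans
        (Aux5.rtg_mergeR _ _ _ R3)
    have p2 := Aux5.rtg_mergeL (nl2 + (nl1 - ol2)) ol3 (Aux5.norm e3)
      (Aux5.eval (Aux5.norm e1) nl1 ol2 (Aux5.norm e2) S1 S2 W1 W2 hl2 hv1)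
    have p3 := Aux5.key (Aux5.norm e1) nl1 ol2 (Aux5.norm e2) nl2 ol3 (Aux5.norm e3)
      S1 S2 S3 W1 W2 W3 hl2 hl3 hv1 hv2
    exact p1.trans (p2.trans p3)
  · have p1 : Relation.ReflTransGen StepE
        (SEnv.merge e1 nl1 (ol2 + (ol3 - nl2)) (SEnv.merge e2 nl2 ol3 e3))
        (SEnv.merge (Aux5.norm e1) nl1 (ol2 + (ol3 - nl2)) (SEnv.merge (Aux5.norm e2) nl2 ol3 (Aux5.norm e3))) :=
      (Aux5.rtg_mergeL _ _ _ R1).trans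
        (Aux5.rtg_mergeR _ _ _ ((Aux5.rtg_mergeL _ _ _ R2).trans (Aux5.rtg_mergeR _ _ _ R3)))
    have p2 := Aux5.rtg_mergeR (Aux5.norm e1) nl1 (ol2 + (ol3 - nl2))
      (Aux5.eval (Aux5.norm e2) nl2 ol3 (Aux5.norm e3) S2 S3 W2 W3 hl3 hv2)
    have p3 := Aux5.eval (Aux5.norm e1) nl1 (ol2 + (ol3 - nl2))
      (Aux5.m (Aux5.norm e2) nl2 ol3 (Aux5.norm e3)) S1 M23.1 W1 M23.2.1 hlM hv1
    exact p1.trans (p2.trans p3)
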